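/- arXiv:0709.0373 — 3 statements merged into one kernel-verified Lean document; each statement's English description precedes it below -/
import Mathlib

section
/- Let A be a subspace arrangement in ℂ^l and x₀ ∈ A a separator. Then the map induced in cohomology by the inclusion j : D(A') ↪ D(A) is injective in every degree: j* : H^q(D(A')) → H^q(D(A)) is injective for all q. -/
/-!
Formalization of the Yuzvinsky–Feichtner rational model `D(B)` of the
complement of an arrangement of linear subspaces of `ℂ^l`, together with the
deletion/restriction constructions of the paper.
-/

open scoped Classical

noncomputable section

/-- The type of linear subspaces of `ℂ^l`. -/
abbrev Subsp (l : ℕ) := Submodule ℂ (Fin l → ℂ)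

/-- Intersection of a finite set of subspaces (`⊤`, i.e. `ℂ^l`, for the empty set). -/
def inter {l : ℕ} (σ : Finset (Subsp l)) : Subsp l := σ.inf id

/-- Underlying vector space of the Yuzvinsky–Feichtner model: formal ℚ-linear
combinations of finite sets of subspaces (basis elements are the `σ ⊆ B`). -/
abbrev DFull (l : ℕ) := Finset (Subsp l) →₀ ℚ

/-- 1-based position of `x` inside `σ`, with respect to the linear order `r`. -/
def pos {l : ℕ} (r : LinearOrder (Subsp l)) (σ : Finset (Subsp l)) (x : Subsp l) : ℕ :=
  (σ.filter fun y => r.lt y x).card + 1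

/-- Value of the differential on the basis element `σ`:
`dσ = ∑_{j : ∩(σ∖{x_j}) = ∩σ} (−1)^j (σ∖{x_j})`. -/
def dBasis {l : ℕ} (r : LinearOrder (Subsp l)) (σ : Finset (Subsp l)) : DFull l :=
  ∑ x ∈ σ.filter fun x => inter (σ.erase x) = inter σ,
    ((-1 : ℚ) ^ pos r σ x) • Finsupp.single (σ.erase x) (1 : ℚ)

/-- The differential of the Yuzvinsky–Feichtner complex. -/
def diff {l : ℕ} (r : LinearOrder (Subsp l)) : DFull l →ₗ[ℚ] DFull l :=
  Finsupp.lsum ℚ fun σ => LinearMap.toSpanSingleton ℚ (DFull l) (dBasis r σ)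

/-- Codimension of `W` inside the ambient subspace `X` (as an integer). -/
def codimIn {l : ℕ} (X W : Subsp l) : ℤ :=
  (Module.finrank ℂ X : ℤ) - (Module.finrank ℂ (W ⊓ X : Subsp l) : ℤ)

/-- Codimension of `W` in `ℂ^l`. -/
def codim {l : ℕ} (W : Subsp l) : ℤ := codimIn ⊤ W

/-- Degree of the basis element `σ`: `deg σ = 2 codim (∩σ) − |σ|`, the
codimension being computed inside the ambient space `X`. -/
def degIn {l : ℕ} (X : Subsp l) (σ : Finset (Subsp l)) : ℤ :=
  2 * codimIn X (inter σ) - (σ.card : ℤ)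

/-- `D(B)`: the span of the basis elements `σ ⊆ B`. -/
def Dsub {l : ℕ} (B : Finset (Subsp l)) : Submodule ℚ (DFull l) :=
  Submodule.span ℚ {f | ∃ σ : Finset (Subsp l), σ ⊆ B ∧ f = Finsupp.single σ (1 : ℚ)}

/-- The degree-`q` component of `D(B)` (ambient space `X`). -/
def Dcomp {l : ℕ} (X : Subsp l) (B : Finset (Subsp l)) (q : ℤ) : Submodule ℚ (DFull l) :=
  Submodule.span ℚ
    {f | ∃ σ : Finset (Subsp l), σ ⊆ B ∧ degIn X σ = q ∧ f = Finsupp.single σ (1 : ℚ)}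

/-- Degree-`q` cocycles of `D(B)`. -/
def cocycles {l : ℕ} (r : LinearOrder (Subsp l)) (X : Subsp l) (B : Finset (Subsp l)) (q : ℤ) :
    Submodule ℚ (DFull l) :=
  Dcomp X B q ⊓ LinearMap.ker (diff r)

/-- Degree-`q` coboundaries of `D(B)`. -/
def cobounds {l : ℕ} (r : LinearOrder (Subsp l)) (X : Subsp l) (B : Finset (Subsp l)) (q : ℤ) :
    Submodule ℚ (DFull l) :=
  Dcomp X B q ⊓ Submodule.map (diff r) (Dcomp X B (q - 1))

/-- Degree-`q` cohomology `H^q(D(B))`. -/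
abbrev cohomology {l : ℕ} (r : LinearOrder (Subsp l)) (X : Subsp l) (B : Finset (Subsp l)) (q : ℤ) :=
  cocycles r X B q ⧸ Submodule.comap (cocycles r X B q).subtype (cobounds r X B q)

lemma Dcomp_mono {l : ℕ} (X : Subsp l) {B B' : Finset (Subsp l)} (h : B' ⊆ B) (q : ℤ) :
    Dcomp X B' q ≤ Dcomp X B q :=
  Submodule.span_mono (by rintro f ⟨σ, h1, h2, rfl⟩; exact ⟨σ, h1.trans h, h2, rfl⟩)

lemma cocycles_mono {l : ℕ} (r : LinearOrder (Subsp l)) (X : Subsp l) {B B' : Finset (Subsp l)}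
    (h : B' ⊆ B) (q : ℤ) : cocycles r X B' q ≤ cocycles r X B q :=
  inf_le_inf_right _ (Dcomp_mono X h q)

lemma cobounds_mono {l : ℕ} (r : LinearOrder (Subsp l)) (X : Subsp l) {B B' : Finset (Subsp l)}
    (h : B' ⊆ B) (q : ℤ) : cobounds r X B' q ≤ cobounds r X B q :=
  inf_le_inf (Dcomp_mono X h q) (Submodule.map_mono (Dcomp_mono X h (q - 1)))

/-- The map induced in degree-`q` cohomology by an inclusion of arrangements `B' ⊆ B`
(induced by the inclusion of cochain complexes `D(B') ↪ D(B)`). -/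
def inducedMap {l : ℕ} (r : LinearOrder (Subsp l)) (X : Subsp l) {B B' : Finset (Subsp l)}
    (h : B' ⊆ B) (q : ℤ) : cohomology r X B' q →ₗ[ℚ] cohomology r X B q :=
  Submodule.mapQ (Submodule.comap (cocycles r X B' q).subtype (cobounds r X B' q))
    (Submodule.comap (cocycles r X B q).subtype (cobounds r X B q))
    (Submodule.inclusion (cocycles_mono r X h q)) (by
      intro v hv
      simp only [Submodule.mem_comap, Submodule.subtype_apply, Submodule.coe_inclusion] at hv ⊢
      exact cobounds_mono r X h q hv)

lemma eraseSubset {l : ℕ} (A : Finset (Subsp l)) (x₀ : Subsp l) : A.erase x₀ ⊆ A := by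
  intro y hy; exact Finset.mem_of_mem_erase hy

/-- A subspace arrangement: no member is contained in another. -/
def IsArrangement {l : ℕ} (A : Finset (Subsp l)) : Prop :=
  ∀ x ∈ A, ∀ y ∈ A, x ≤ y → x = y

/-- `Ã'' = {x₀ ∩ y | y ∈ A'}`. -/
def tildeRestriction {l : ℕ} (x₀ : Subsp l) (A' : Finset (Subsp l)) : Finset (Subsp l) :=
  A'.image fun y => x₀ ⊓ y

/-- The restricted arrangement `A''`: the elements of `Ã''` that are not strictly
contained in another element of `Ã''`. -/
def restriction {l : ℕ} (x₀ : Subsp l) (A' : Finset (Subsp l)) : Finset (Subsp l) :=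
  (tildeRestriction x₀ A').filter fun w => ∀ w' ∈ tildeRestriction x₀ A', ¬ w < w'

lemma restriction_subset {l : ℕ} (x₀ : Subsp l) (A' : Finset (Subsp l)) :
    restriction x₀ A' ⊆ tildeRestriction x₀ A' := Finset.filter_subset _ _

/-- `x₀` is a separator: `x₀ ∩ (∩ A') ⊊ ∩ A'`. -/
def IsSeparator {l : ℕ} (A : Finset (Subsp l)) (x₀ : Subsp l) : Prop :=
  x₀ ⊓ inter (A.erase x₀) < inter (A.erase x₀)

/-- The conditions imposed in the paper on the fixed linear order on the
subspaces: `x₀` comes first, the equivalence classes of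
`y ∼ z ⟺ x₀ ∩ y = x₀ ∩ z` on `A' = A ∖ {x₀}` are consecutive intervals,
and the order on `Ã''` is compatible with the one on `A'`. -/
def GoodOrder {l : ℕ} (r : LinearOrder (Subsp l)) (A : Finset (Subsp l)) (x₀ : Subsp l) : Prop :=
  (∀ y ∈ A.erase x₀, r.lt x₀ y) ∧
  (∀ y ∈ A.erase x₀, ∀ z ∈ A.erase x₀, ∀ w ∈ A.erase x₀,
      r.le y z → r.le z w → x₀ ⊓ y = x₀ ⊓ w → x₀ ⊓ y = x₀ ⊓ z) ∧
  (∀ y ∈ A.erase x₀, ∀ z ∈ A.erase x₀, r.lt y z → x₀ ⊓ y ≠ x₀ ⊓ z →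
      r.lt (x₀ ⊓ y) (x₀ ⊓ z))

/-- Value of the map `φ` on a basis element `σ`. -/
def phiBasis {l : ℕ} (x₀ : Subsp l) (σ : Finset (Subsp l)) : DFull l :=
  if x₀ ∈ σ ∧ Set.InjOn (fun y => x₀ ⊓ y) ↑(σ.erase x₀) then
    ((-1 : ℚ) ^ (σ.card - 1)) • Finsupp.single ((σ.erase x₀).image fun y => x₀ ⊓ y) (1 : ℚ)
  else 0

/-- The map `φ : D(A) → D(Ã'')` (defined on the whole ambient space). -/
def phi {l : ℕ} (x₀ : Subsp l) : DFull l →ₗ[ℚ] DFull l :=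
  Finsupp.lsum ℚ fun σ => LinearMap.toSpanSingleton ℚ (DFull l) (phiBasis x₀ σ)

lemma phi_apply_single {l : ℕ} (x₀ : Subsp l) (σ : Finset (Subsp l)) :
    phi x₀ (Finsupp.single σ (1 : ℚ)) = phiBasis x₀ σ := by
  simp [phi]

lemma diff_apply_single {l : ℕ} (r : LinearOrder (Subsp l)) (σ : Finset (Subsp l)) :
    diff r (Finsupp.single σ (1 : ℚ)) = dBasis r σ := by
  simp [diff]

lemma phi_vanish {l : ℕ} (x₀ : Subsp l) {B : Finset (Subsp l)} (hx : x₀ ∉ B) :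
    ∀ f ∈ Dsub B, phi x₀ f = 0 := by
  intro f hf
  induction hf using Submodule.span_induction with
  | mem f hfmem =>
      obtain ⟨σ, hσ, rfl⟩ := hfmem
      rw [phi_apply_single]
      have hx₀σ : ¬ x₀ ∈ σ := fun h => hx (hσ h)
      simp [phiBasis, hx₀σ]
  | zero => simp
  | add f g _ _ hf hg => simp [map_add, hf, hg]
  | smul c f _ hf => simp [map_smul, hf]

lemma diff_mem {l : ℕ} (r : LinearOrder (Subsp l)) {B : Finset (Subsp l)} :
    ∀ f ∈ Dsub B, diff r f ∈ Dsub B := by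
  intro f hf
  induction hf using Submodule.span_induction with
  | mem f hfmem =>
      obtain ⟨σ, hσ, rfl⟩ := hfmem
      rw [diff_apply_single, dBasis]
      refine Submodule.sum_mem _ fun x hx => Submodule.smul_mem _ _ ?_
      exact Submodule.subset_span ⟨σ.erase x, (Finset.erase_subset _ _).trans hσ, rfl⟩
  | zero => simp
  | add f g _ _ hf hg => rw [map_add]; exact (Dsub B).add_mem hf hg
  | smul c f _ hf => rw [map_smul]; exact (Dsub B).smul_mem c hf

/-- The quotient cochain complex `D(A)/D(A')`. -/
abbrev DQuot {l : ℕ} (A : Finset (Subsp l)) (x₀ : Subsp l) :=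
  Dsub A ⧸ Submodule.comap (Dsub A).subtype (Dsub (A.erase x₀))

/-- Projection `D(A) → D(A)/D(A')`. -/
def quotProj {l : ℕ} (A : Finset (Subsp l)) (x₀ : Subsp l) : Dsub A →ₗ[ℚ] DQuot A x₀ :=
  (Submodule.comap (Dsub A).subtype (Dsub (A.erase x₀))).mkQ

/-- The differential, restricted to `D(A)`. -/
def diffRes {l : ℕ} (r : LinearOrder (Subsp l)) (A : Finset (Subsp l)) : Dsub A →ₗ[ℚ] Dsub A :=
  (diff r).restrict fun f hf => diff_mem r f hf

/-- The differential of the quotient complex `D(A)/D(A')`. -/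
def diffQuot {l : ℕ} (r : LinearOrder (Subsp l)) (A : Finset (Subsp l)) (x₀ : Subsp l) :
    DQuot A x₀ →ₗ[ℚ] DQuot A x₀ :=
  Submodule.mapQ _ _ (diffRes r A) (by
      intro v hv
      simp only [Submodule.mem_comap, Submodule.subtype_apply] at hv ⊢
      exact diff_mem r _ hv)

/-- The map `φ̄ : D(A)/D(A') → D(Ã'')` induced by `φ`. -/
def phiBar {l : ℕ} (x₀ : Subsp l) (A : Finset (Subsp l)) : DQuot A x₀ →ₗ[ℚ] DFull l :=
  Submodule.liftQ _ ((phi x₀).comp (Dsub A).subtype) (by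
    intro v hv
    simp only [Submodule.mem_comap, Submodule.subtype_apply] at hv
    simp only [LinearMap.mem_ker, LinearMap.comp_apply, Submodule.subtype_apply]
    exact phi_vanish x₀ (Finset.notMem_erase x₀ A) _ hv)

/-- The subspace `I_{u,v}` of `D(A)/D(A')`, as a subspace of `D(A)` before
projecting: spanned by the `{x₀,u,τ} − {x₀,v,τ}` and the `{x₀,u,v,τ}`. -/
def IuvFull {l : ℕ} (A : Finset (Subsp l)) (x₀ u v : Subsp l) : Submodule ℚ (DFull l) :=
  Submodule.span ℚ
    ({f | ∃ τ : Finset (Subsp l), (↑τ : Set (Subsp l)) ⊆ ↑A \ {x₀, u, v} ∧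
        f = Finsupp.single (insert x₀ (insert u τ)) (1 : ℚ)
          - Finsupp.single (insert x₀ (insert v τ)) (1 : ℚ)} ∪
     {f | ∃ τ : Finset (Subsp l), (↑τ : Set (Subsp l)) ⊆ ↑A \ {x₀, u, v} ∧
        f = Finsupp.single (insert x₀ (insert u (insert v τ))) (1 : ℚ)})

/-- The subspace `I_{u,v} ⊆ D(A)/D(A')`. -/
def Iuv {l : ℕ} (A : Finset (Subsp l)) (x₀ u v : Subsp l) : Submodule ℚ (DQuot A x₀) :=
  Submodule.map (quotProj A x₀) (Submodule.comap (Dsub A).subtype (IuvFull A x₀ u v))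

/-- The set `E` of pairs `(y,z)` of distinct elements of `A'` with `x₀ ∩ y = x₀ ∩ z`. -/
def Epairs {l : ℕ} (A : Finset (Subsp l)) (x₀ : Subsp l) : Set (Subsp l × Subsp l) :=
  {p | p.1 ∈ A.erase x₀ ∧ p.2 ∈ A.erase x₀ ∧ x₀ ⊓ p.1 = x₀ ⊓ p.2 ∧ p.1 ≠ p.2}

/-- The subspace `V = Σ_{(u,v) ∈ E} I_{u,v}` of `D(A)/D(A')`. -/
def Vsub {l : ℕ} (A : Finset (Subsp l)) (x₀ : Subsp l) : Submodule ℚ (DQuot A x₀) :=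
  ⨆ p ∈ Epairs A x₀, Iuv A x₀ p.1 p.2

/-- Degree-`q` part of the quotient complex `D(A)/D(A')`. -/
def DcompQuot {l : ℕ} (X : Subsp l) (A : Finset (Subsp l)) (x₀ : Subsp l) (q : ℤ) :
    Submodule ℚ (DQuot A x₀) :=
  Submodule.map (quotProj A x₀) (Submodule.comap (Dsub A).subtype (Dcomp X A q))

def cocyclesQuot {l : ℕ} (r : LinearOrder (Subsp l)) (X : Subsp l) (A : Finset (Subsp l))
    (x₀ : Subsp l) (q : ℤ) : Submodule ℚ (DQuot A x₀) :=
  DcompQuot X A x₀ q ⊓ LinearMap.ker (diffQuot r A x₀)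

def coboundsQuot {l : ℕ} (r : LinearOrder (Subsp l)) (X : Subsp l) (A : Finset (Subsp l))
    (x₀ : Subsp l) (q : ℤ) : Submodule ℚ (DQuot A x₀) :=
  DcompQuot X A x₀ q ⊓ Submodule.map (diffQuot r A x₀) (DcompQuot X A x₀ (q - 1))

/-- Degree-`q` cohomology of the quotient complex `D(A)/D(A')`. -/
abbrev cohomologyQuot {l : ℕ} (r : LinearOrder (Subsp l)) (X : Subsp l) (A : Finset (Subsp l))
    (x₀ : Subsp l) (q : ℤ) :=
  cocyclesQuot r X A x₀ q ⧸
    Submodule.comap (cocyclesQuot r X A x₀ q).subtype (coboundsQuot r X A x₀ q)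

/-- Ungraded cocycles of `D(B)`. -/
def cocyclesAll {l : ℕ} (r : LinearOrder (Subsp l)) (B : Finset (Subsp l)) :
    Submodule ℚ (DFull l) :=
  Dsub B ⊓ LinearMap.ker (diff r)

/-- Ungraded coboundaries of `D(B)`. -/
def coboundsAll {l : ℕ} (r : LinearOrder (Subsp l)) (B : Finset (Subsp l)) :
    Submodule ℚ (DFull l) :=
  Dsub B ⊓ Submodule.map (diff r) (Dsub B)

/-- Ungraded cohomology `H^*(D(B))`. -/
abbrev cohomologyAll {l : ℕ} (r : LinearOrder (Subsp l)) (B : Finset (Subsp l)) :=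
  cocyclesAll r B ⧸ Submodule.comap (cocyclesAll r B).subtype (coboundsAll r B)

/-- The map `θ : D(A') → D(Ã'')`, `{x_{i₁},…,x_{i_r}} ↦ {x₀ ∩ x_{i₁},…,x₀ ∩ x_{i_r}}`. -/
def theta {l : ℕ} (x₀ : Subsp l) : DFull l →ₗ[ℚ] DFull l :=
  Finsupp.lsum ℚ fun σ =>
    LinearMap.toSpanSingleton ℚ (DFull l) (Finsupp.single (σ.image fun y => x₀ ⊓ y) (1 : ℚ))

/-- The map `k : D(A) → D(A')`, the identity on basis elements not containing
`x₀`, and zero on those containing `x₀`. -/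
def kmap {l : ℕ} (x₀ : Subsp l) : DFull l →ₗ[ℚ] DFull l :=
  Finsupp.lsum ℚ fun σ =>
    if x₀ ∈ σ then 0 else LinearMap.toSpanSingleton ℚ (DFull l) (Finsupp.single σ (1 : ℚ))

/-- The Euler characteristic of `D(A)`:
`χ = Σ_q (−1)^q dim_ℚ H^q(D(A))` (all degrees lie in `[−|A|, 2l]`). -/
def eulerChar {l : ℕ} (r : LinearOrder (Subsp l)) (A : Finset (Subsp l)) : ℚ :=
  ∑ q ∈ Finset.Icc (-(A.card : ℤ)) (2 * l : ℤ),
    (-1 : ℚ) ^ q * (Module.finrank ℚ (cohomology r ⊤ A q) : ℚ)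

/-- The intersection lattice `L(A)`: all intersections of members of `A`
(with `ℂ^l = ∩∅` as bottom element), ordered by reverse inclusion. -/
def latticeSet {l : ℕ} (A : Finset (Subsp l)) : Set (Subsp l) :=
  {W | ∃ S : Finset (Subsp l), S ⊆ A ∧ W = inter S}

/-- `covL A a b`: in the intersection lattice `L(A)` (ordered by reverse
inclusion), `b` covers `a`. -/
def covL {l : ℕ} (A : Finset (Subsp l)) (a b : Subsp l) : Prop :=
  b < a ∧ ∀ c ∈ latticeSet A, ¬(b < c ∧ c < a)

/-- The meet `a ∧ b` in the intersection lattice `L(A)`: the intersection of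
the members of `A` containing both `a` and `b`. -/
def meetL {l : ℕ} (A : Finset (Subsp l)) (a b : Subsp l) : Subsp l :=
  inter (A.filter fun x => a ≤ x ∧ b ≤ x)

/-- `L(A)` is a geometric lattice: it is a finite atomistic semimodular lattice.
(Atoms are the elements covering the bottom element `ℂ^l`; every element is the
join — i.e. intersection — of the atoms it lies above; and the lattice is
(upper) semimodular.  The join of `a` and `b` in `L(A)` is `a ⊓ b`.) -/
def IsGeometricL {l : ℕ} (A : Finset (Subsp l)) : Prop :=
  (∀ a ∈ latticeSet A, a = sInf {t : Subsp l | t ∈ latticeSet A ∧ covL A ⊤ t ∧ a ≤ t}) ∧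
  (∀ a ∈ latticeSet A, ∀ b ∈ latticeSet A, covL A (meetL A a b) a → covL A b (a ⊓ b))

end

section Aux

lemma kmap_single {l : ℕ} (x₀ : Subsp l) (σ : Finset (Subsp l)) (c : ℚ) :
    kmap x₀ (Finsupp.single σ c) =
      if x₀ ∈ σ then 0 else Finsupp.single σ c := by
  by_cases h : x₀ ∈ σ <;> simp [kmap, h, Finsupp.smul_single]

lemma sep_not_drop {l : ℕ} {B : Finset (Subsp l)} {x₀ : Subsp l}
    (hsep : ¬ inter B ≤ x₀) {σ τ : Finset (Subsp l)}
    (heq : inter τ = inter σ) (hτσ : σ = insert x₀ τ) (hτB : τ ⊆ B) : False := by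
  have h1 : inter σ = x₀ ⊓ inter τ := by
    rw [hτσ]
    simp [inter]
  have hle : inter τ ≤ x₀ := (heq.trans h1).le.trans inf_le_left
  exact hsep ((Finset.inf_mono hτB).trans hle)

lemma kmap_dBasis {l : ℕ} (r : LinearOrder (Subsp l)) {A B : Finset (Subsp l)} {x₀ : Subsp l}
    (hsep : ¬ inter B ≤ x₀) (hB : ∀ y ∈ A, y ≠ x₀ → y ∈ B)
    {σ : Finset (Subsp l)} (hσ : σ ⊆ A) :
    kmap x₀ (dBasis r σ) = if x₀ ∈ σ then 0 else dBasis r σ := by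
  by_cases h : x₀ ∈ σ
  · rw [if_pos h, dBasis, map_sum]
    refine Finset.sum_eq_zero fun x hx => ?_
    rw [Finset.mem_filter] at hx
    have hxne : x₀ ≠ x := by
      intro he
      subst he
      refine sep_not_drop hsep hx.2 ?_ ?_
      · ext y
        by_cases hy : y = x₀ <;> simp [hy, hx.1, Finset.mem_insert, Finset.mem_erase]
      · intro y hy
        exact hB y (hσ (Finset.mem_of_mem_erase hy)) (Finset.ne_of_mem_erase hy)
    simp [kmap_single, Finset.mem_erase, h, hxne]
  · rw [if_neg h]
    rw [dBasis, map_sum]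
    refine Finset.sum_congr rfl fun x hx => ?_
    simp [kmap_single, Finset.mem_erase, h]

lemma kmap_diff {l : ℕ} (r : LinearOrder (Subsp l)) {A B : Finset (Subsp l)} {x₀ : Subsp l}
    (hsep : ¬ inter B ≤ x₀) (hB : ∀ y ∈ A, y ≠ x₀ → y ∈ B) :
    ∀ f ∈ Dsub A, kmap x₀ (diff r f) = diff r (kmap x₀ f) := by
  intro f hf
  induction hf using Submodule.span_induction with
  | mem f hfmem =>
    obtain ⟨σ, hσ, rfl⟩ := hfmem
    rw [diff_apply_single, kmap_dBasis r hsep hB hσ, kmap_single]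
    by_cases h : x₀ ∈ σ <;> simp [h, diff_apply_single]
  | zero => simp
  | add f g _ _ hf hg => simp [map_add, hf, hg]
  | smul c f _ hf => simp [map_smul, hf]

lemma Dcomp_le_Dsub {l : ℕ} (X : Subsp l) (B : Finset (Subsp l)) (q : ℤ) :
    Dcomp X B q ≤ Dsub B :=
  Submodule.span_le.mpr (by
    rintro f ⟨σ, h1, _, rfl⟩
    exact Submodule.subset_span ⟨σ, h1, rfl⟩)

lemma kmap_mem_Dcomp {l : ℕ} (X : Subsp l) {A B : Finset (Subsp l)} (x₀ : Subsp l)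
    (hB : ∀ y ∈ A, y ≠ x₀ → y ∈ B) (q : ℤ) :
    ∀ f ∈ Dcomp X A q, kmap x₀ f ∈ Dcomp X B q := by
  intro f hf
  induction hf using Submodule.span_induction with
  | mem f hfmem =>
    obtain ⟨σ, hσ, hdeg, rfl⟩ := hfmem
    rw [kmap_single]
    by_cases h : x₀ ∈ σ
    · rw [if_pos h]; exact Submodule.zero_mem _
    · rw [if_neg h]
      refine Submodule.subset_span ⟨σ, fun y hy => hB y (hσ hy) ?_, hdeg, rfl⟩
      rintro rfl; exact h hy
  | zero => simp
  | add f g _ _ hf hg => rw [map_add]; exact Submodule.add_mem _ hf hg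
  | smul c f _ hf => rw [map_smul]; exact Submodule.smul_mem _ c hf

lemma kmap_fix {l : ℕ} (X : Subsp l) (x₀ : Subsp l) {B : Finset (Subsp l)} (q : ℤ) :
    ∀ f ∈ Dcomp X B q, x₀ ∉ B → kmap x₀ f = f := by
  intro f hf
  induction hf using Submodule.span_induction with
  | mem f hfmem =>
    intro hx₀B
    obtain ⟨σ, hσ, _, rfl⟩ := hfmem
    have h : x₀ ∉ σ := fun hc => hx₀B (hσ hc)
    rw [kmap_single, if_neg h]
  | zero => simp
  | add f g _ _ hf hg => intro h; rw [map_add, hf h, hg h]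
  | smul c f _ hf => intro h; rw [map_smul, hf h]

end Aux

set_option maxHeartbeats 1000000 in
/-- from the proof of Proposition 4.4. If `x₀ ∈ A` is a
separator, then the map induced in cohomology by the inclusion
`j : D(A') ↪ D(A)` is injective in every degree. -/
theorem statement11 {l : ℕ} (r : LinearOrder (Subsp l)) (A : Finset (Subsp l))
    (harr : IsArrangement A) (x₀ : Subsp l) (hx₀ : x₀ ∈ A) (hsep : IsSeparator A x₀) :
    ∀ q : ℤ, Function.Injective (inducedMap r ⊤ (eraseSubset A x₀) q) := by
  intro q
  unfold IsSeparator at hsep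
  have hsep' : ¬ _ ≤ x₀ := fun hle => hsep.ne (inf_eq_right.mpr hle)
  rw [← LinearMap.ker_eq_bot, Submodule.eq_bot_iff]
  intro x hx
  obtain ⟨v, rfl⟩ := Submodule.Quotient.mk_surjective _ x
  rw [LinearMap.mem_ker, inducedMap, Submodule.mapQ_apply, Submodule.Quotient.mk_eq_zero] at hx
  rw [Submodule.Quotient.mk_eq_zero]
  simp only [Submodule.mem_comap, Submodule.subtype_apply, Submodule.coe_inclusion] at hx ⊢
  obtain ⟨hv1, w, hw, hdw⟩ := hx
  have hvd := (Submodule.mem_inf.mp v.2).1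
  refine Submodule.mem_inf.mpr ⟨hvd, ?_⟩
  refine Submodule.mem_map.mpr ⟨kmap x₀ w, kmap_mem_Dcomp ⊤ x₀ ?_ (q - 1) w hw, ?_⟩
  · intro y hy hne
    simp only [Finset.mem_erase]
    exact ⟨hne, hy⟩
  · rw [← kmap_diff r hsep' ?_ w (Dcomp_le_Dsub ⊤ A (q - 1) hw), hdw]
    · exact kmap_fix ⊤ x₀ q _ hvd (by simp)
    · intro y hy hne
      simp only [Finset.mem_erase]
      exact ⟨hne, hy⟩
end

section
/- Let A = {x₀, x₁, …, x_n} be a subspace arrangement in ℂ^l whose intersection lattice L(A) is a geometric lattice, and suppose x₀ is a separator. Then for every subset {i₁, …, i_{r+1}} ⊆ {1, …, n}: x₀ ∩ x_{i₁} ∩ … ∩ x_{i_r} = x₀ ∩ x_{i₁} ∩ … ∩ x_{i_{r+1}} if and only if x_{i₁} ∩ … ∩ x_{i_r} = x_{i₁} ∩ … ∩ x_{i_{r+1}}. -/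
/-!
Formalization of the Yuzvinsky–Feichtner rational model `D(B)` of the
complement of an arrangement of linear subspaces of `ℂ^l`, together with the
deletion/restriction constructions of the paper.
-/

open scoped Classical

/-- Lemma 5.1. Let `A` be a subspace arrangement whose
intersection lattice is geometric and in which `x₀` is a separator. Then for
every `S = {x_{i₁}, …, x_{i_r}} ⊆ A' = A ∖ {x₀}` and every `y ∈ A'`:
`x₀ ∩ (∩S) = x₀ ∩ (∩S) ∩ y` if and only if `∩S = (∩S) ∩ y`. -/
theorem statement13 {l : ℕ} (A : Finset (Subsp l)) (harr : IsArrangement A)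
    (x₀ : Subsp l) (hx₀ : x₀ ∈ A) (hgeo : IsGeometricL A) (hsep : IsSeparator A x₀) :
    ∀ S ⊆ A.erase x₀, ∀ y ∈ A.erase x₀,
      (x₀ ⊓ inter S = x₀ ⊓ inter (insert y S) ↔ inter S = inter (insert y S)) := by
  intro S hS y hy
  have hsep' : x₀ ⊓ inter (A.erase x₀) < inter (A.erase x₀) := hsep
  have hins : inter (insert y S) = y ⊓ inter S := by
    simp [inter, Finset.inf_insert]
  set t := inter S with ht
  rw [hins]
  constructor
  · intro h
    have hxy : x₀ ⊓ t ≤ y := by rw [h]; exact le_trans inf_le_right inf_le_left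
    by_cases htx : t ≤ x₀
    · have hty : t ≤ y := by
        have h' := hxy
        rwa [inf_eq_right.mpr htx] at h'
      exact (inf_eq_right.mpr hty).symm
    · have hx0ne : x₀ ≠ ⊤ := by
        intro hx
        rw [hx, top_inf_eq] at hsep'
        exact lt_irrefl _ hsep'
      have hx0L : x₀ ∈ latticeSet A := ⟨{x₀}, by simpa using hx₀, by simp [inter]⟩
      have htL : t ∈ latticeSet A :=
        ⟨S, fun z hz => Finset.mem_of_mem_erase (hS hz), rfl⟩
      have hcovtop : covL A ⊤ x₀ := by
        refine ⟨lt_top_iff_ne_top.mpr hx0ne, ?_⟩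
        rintro c ⟨S', hS', rfl⟩ ⟨h1, h2⟩
        have hne : S'.Nonempty := by
          rcases S'.eq_empty_or_nonempty with hE | hE
          · subst hE; simp [inter] at h2
          · exact hE
        obtain ⟨s, hs⟩ := hne
        have hcs : inter S' ≤ s := Finset.inf_le hs
        have hxs : x₀ = s := harr x₀ hx₀ s (hS' hs) (le_of_lt (lt_of_lt_of_le h1 hcs))
        exact absurd (hcs.trans hxs.ge) (not_le_of_gt h1)
      have hmeet : meetL A x₀ t = ⊤ := by
        have hfil : A.filter (fun z => x₀ ≤ z ∧ t ≤ z) = ∅ := by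
          rw [Finset.filter_eq_empty_iff]
          rintro z hz ⟨h1, h2⟩
          have hz' : x₀ = z := harr x₀ hx₀ z hz h1
          exact htx (by rw [hz']; exact h2)
        rw [meetL, hfil]
        simp [inter]
      have hcov : covL A t (x₀ ⊓ t) := hgeo.2 x₀ hx0L t htL (by rw [hmeet]; exact hcovtop)
      have hyT : y ⊓ t ∈ latticeSet A :=
        ⟨insert y S, Finset.insert_subset (Finset.mem_of_mem_erase hy)
          (fun z hz => Finset.mem_of_mem_erase (hS hz)), hins.symm⟩
      by_cases hyt : t ≤ y
      · exact (inf_eq_right.mpr hyt).symm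
      · exfalso
        have h1 : y ⊓ t < t :=
          lt_of_le_of_ne inf_le_right (fun he => hyt (inf_eq_right.mp he))
        have h2 : x₀ ⊓ t ≤ y ⊓ t := le_inf hxy inf_le_right
        have h3 : ¬ (x₀ ⊓ t < y ⊓ t ∧ y ⊓ t < t) := hcov.2 _ hyT
        have h4 : y ⊓ t ≤ x₀ ⊓ t := by
          by_contra hc
          exact h3 ⟨lt_of_le_of_ne h2 (fun he => hc he.ge), h1⟩
        have hsub : insert y S ⊆ A.erase x₀ := Finset.insert_subset hy hS
        have h5 : inter (A.erase x₀) ≤ y ⊓ t := by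
          rw [← hins]; exact Finset.inf_mono hsub
        have h6 : inter (A.erase x₀) ≤ x₀ ⊓ inter (A.erase x₀) :=
          le_inf (h5.trans (h4.trans inf_le_left)) le_rfl
        exact absurd h6 (not_le_of_gt hsep')
  · intro h
    rw [← h]
end

section
/- Let A = {x₀, x₁, …, x_n} be a subspace arrangement in ℂ^l whose intersection lattice L(A) is geometric and in which x₀ is a separator. Then the map θ : D(A') → D(Ã'') sending the basis element {x_{i₁}, …, x_{i_r}} to {x₀ ∩ x_{i₁}, …, x₀ ∩ x_{i_r}} maps basis elements bijectively to basis elements and commutes with the differentials; consequently θ induces an isomorphism of (ungraded) ℚ-vector spaces H*(D(A')) ≅ H*(D(A'')). Moreover θ sends a basis element σ = {x_{i₁}, …, x_{i_r}} of degree deg σ to an element of degree deg σ − 2·codim(x₀ + (x_{i₁} ∩ … ∩ x_{i_r})), a shift by an even non-negative integer. -/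
/-!
Formalization of the Yuzvinsky–Feichtner rational model `D(B)` of the
complement of an arrangement of linear subspaces of `ℂ^l`, together with the
deletion/restriction constructions of the paper.
-/

open scoped Classical

/-! ### Auxiliary lemmas for Statement 14 -/

noncomputable section Aux14

open Finset

variable {l : ℕ}

lemma inter_mono' {σ τ : Finset (Subsp l)} (h : σ ⊆ τ) : inter τ ≤ inter σ :=
  Finset.inf_mono h

lemma atom0 {A : Finset (Subsp l)} (harr : IsArrangement A) {x₀ : Subsp l} (hx₀ : x₀ ∈ A)
    (hne : x₀ ≠ ⊤) : covL A ⊤ x₀ := by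
  refine ⟨lt_top_iff_ne_top.mpr hne, ?_⟩
  rintro c ⟨S, hS, rfl⟩ ⟨h1, h2⟩
  have hSne : S.Nonempty := by
    rcases S.eq_empty_or_nonempty with h | h
    · subst h; simp [inter] at h2
    · exact h
  obtain ⟨x, hx⟩ := hSne
  have hcx : inter S ≤ x := Finset.inf_le hx
  have hxx : x₀ = x := harr x₀ hx₀ x (hS hx) (le_of_lt (lt_of_lt_of_le h1 hcx))
  exact absurd hxx (ne_of_lt (h1.trans_le hcx))

/-- Key lattice lemma: if `x₀` is a separator in a geometric `L(A)`, then
intersecting with `x₀` is injective on nested flats of `L(A')`. -/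
lemma key_inj {A : Finset (Subsp l)} (harr : IsArrangement A) {x₀ : Subsp l} (hx₀ : x₀ ∈ A)
    (hgeo : IsGeometricL A) (hsep : IsSeparator A x₀)
    {S T : Finset (Subsp l)} (hS : S ⊆ A.erase x₀) (hT : T ⊆ A.erase x₀)
    (hle : inter S ≤ inter T) (heq : x₀ ⊓ inter S = x₀ ⊓ inter T) :
    inter S = inter T := by
  by_contra hne
  have hlt : inter S < inter T := lt_of_le_of_ne hle hne
  have hns : ∀ U : Finset (Subsp l), U ⊆ A.erase x₀ → ¬ inter U ≤ x₀ := by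
    intro U hU hUx
    have h1 : inter (A.erase x₀) ≤ inter U := inter_mono' hU
    exact absurd (inf_eq_right.mpr (h1.trans hUx)) (ne_of_lt hsep)
  have hx₀ne : x₀ ≠ ⊤ := fun h => hns (A.erase x₀) (subset_refl _) (h ▸ le_top)
  have hcov0 : covL A ⊤ x₀ := atom0 harr hx₀ hx₀ne
  have hmeet : meetL A x₀ (inter T) = ⊤ := by
    have hf : A.filter (fun x => x₀ ≤ x ∧ inter T ≤ x) = ∅ := by
      rw [Finset.filter_eq_empty_iff]
      rintro x hx ⟨h1, h2⟩
      exact hns T hT ((harr x₀ hx₀ x hx h1) ▸ h2)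
    rw [meetL, hf]; rfl
  have hx₀L : x₀ ∈ latticeSet A :=
    ⟨{x₀}, Finset.singleton_subset_iff.mpr hx₀, by simp [inter]⟩
  have hTL : inter T ∈ latticeSet A := ⟨T, hT.trans (Finset.erase_subset _ _), rfl⟩
  have hcov := hgeo.2 x₀ hx₀L (inter T) hTL (by rw [hmeet]; exact hcov0)
  refine hcov.2 (inter S) ⟨S, hS.trans (Finset.erase_subset _ _), rfl⟩ ⟨?_, hlt⟩
  rw [← heq]
  exact lt_of_le_of_ne inf_le_right (fun h => hns S hS (inf_eq_right.mp h))

/-- Injectivity of `y ↦ x₀ ⊓ y` on `A'`. -/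
lemma f_inj {A : Finset (Subsp l)} (harr : IsArrangement A) {x₀ : Subsp l} (hx₀ : x₀ ∈ A)
    (hgeo : IsGeometricL A) (hsep : IsSeparator A x₀) :
    ∀ y ∈ A.erase x₀, ∀ z ∈ A.erase x₀, x₀ ⊓ y = x₀ ⊓ z → y = z := by
  intro y hy z hz hyz
  have hS : ({y, z} : Finset (Subsp l)) ⊆ A.erase x₀ := by
    intro w hw
    rcases Finset.mem_insert.mp hw with h | h
    · exact h ▸ hy
    · exact (Finset.mem_singleton.mp h) ▸ hz
  have h1 : inter ({y, z} : Finset (Subsp l)) = y ⊓ z := by simp [inter]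
  have h2 : inter ({z} : Finset (Subsp l)) = z := by simp [inter]
  have hkey := key_inj harr hx₀ hgeo hsep hS (Finset.singleton_subset_iff.mpr hz)
    (by rw [h1, h2]; exact inf_le_right)
    (by rw [h1, h2, ← inf_assoc, hyz, inf_assoc, inf_idem])
  rw [h1, h2] at hkey
  exact (harr z (Finset.mem_of_mem_erase hz) y (Finset.mem_of_mem_erase hy)
    (inf_eq_right.mp hkey)).symm

lemma erase_image_of_inj {g : Subsp l → Subsp l} {A' σ : Finset (Subsp l)} (hσ : σ ⊆ A')
    (hinj : ∀ y ∈ A', ∀ z ∈ A', g y = g z → y = z) {y : Subsp l} (hy : y ∈ σ) :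
    (σ.erase y).image g = (σ.image g).erase (g y) := by
  ext w
  simp only [Finset.mem_image, Finset.mem_erase]
  constructor
  · rintro ⟨z, ⟨hzy, hzσ⟩, rfl⟩
    exact ⟨fun h => hzy (hinj z (hσ hzσ) y (hσ hy) h), z, hzσ, rfl⟩
  · rintro ⟨hw, z, hz, rfl⟩
    exact ⟨z, ⟨fun h => hw (by rw [h]), hz⟩, rfl⟩

lemma inf_image_inter (x₀ : Subsp l) (σ : Finset (Subsp l)) (h : σ.Nonempty) :
    inter (σ.image fun y => x₀ ⊓ y) = x₀ ⊓ inter σ := by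
  rw [inter, Finset.inf_image]
  refine le_antisymm (le_inf ?_ ?_) (Finset.le_inf ?_)
  · obtain ⟨y, hy⟩ := h
    exact (Finset.inf_le hy).trans inf_le_left
  · exact Finset.le_inf fun y hy => (Finset.inf_le hy).trans inf_le_right
  · intro y hy
    exact inf_le_inf_left x₀ (Finset.inf_le hy)

lemma inf_image_inter' (x₀ : Subsp l) (σ : Finset (Subsp l)) :
    x₀ ⊓ inter (σ.image fun y => x₀ ⊓ y) = x₀ ⊓ inter σ := by
  rcases σ.eq_empty_or_nonempty with h | h
  · subst h; simp [inter]
  · rw [inf_image_inter x₀ σ h, ← inf_assoc, inf_idem]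

lemma theta_apply_single (x₀ : Subsp l) (σ : Finset (Subsp l)) :
    theta x₀ (Finsupp.single σ (1 : ℚ)) =
      Finsupp.single (σ.image fun y => x₀ ⊓ y) (1 : ℚ) := by
  simp [theta]

/-- The inverse bijection on basis elements. -/
def ginv (x₀ : Subsp l) (A' τ : Finset (Subsp l)) : Finset (Subsp l) :=
  A'.filter fun y => x₀ ⊓ y ∈ τ

/-- The inverse map `η : D(Ã'') → D(A')`. -/
def eta (x₀ : Subsp l) (A' : Finset (Subsp l)) : DFull l →ₗ[ℚ] DFull l :=
  Finsupp.lsum ℚ fun τ =>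
    LinearMap.toSpanSingleton ℚ (DFull l) (Finsupp.single (ginv x₀ A' τ) (1 : ℚ))

lemma eta_apply_single (x₀ : Subsp l) (A' τ : Finset (Subsp l)) :
    eta x₀ A' (Finsupp.single τ (1 : ℚ)) = Finsupp.single (ginv x₀ A' τ) (1 : ℚ) := by
  simp [eta]

/-- Packaging lemma: mutually inverse chain maps induce an isomorphism on
ungraded cohomology. -/
lemma cohomIso {l : ℕ} (r : LinearOrder (Subsp l)) (B B'' : Finset (Subsp l))
    (th et : DFull l →ₗ[ℚ] DFull l)
    (hth : ∀ g ∈ Dsub B, th g ∈ Dsub B'')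
    (het : ∀ g ∈ Dsub B'', et g ∈ Dsub B)
    (hdth : ∀ g ∈ Dsub B, th (diff r g) = diff r (th g))
    (hdet : ∀ g ∈ Dsub B'', et (diff r g) = diff r (et g))
    (hte : ∀ g ∈ Dsub B, et (th g) = g)
    (het' : ∀ g ∈ Dsub B'', th (et g) = g) :
    ∃ (hZ : ∀ g ∈ cocyclesAll r B, th g ∈ cocyclesAll r B'')
      (e : cohomologyAll r B ≃ₗ[ℚ] cohomologyAll r B''),
      ∀ (g : DFull l) (hg : g ∈ cocyclesAll r B),
        e (Submodule.Quotient.mk ⟨g, hg⟩) = Submodule.Quotient.mk ⟨th g, hZ g hg⟩ := by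
  have hZ : ∀ g ∈ cocyclesAll r B, th g ∈ cocyclesAll r B'' := by
    intro g hg
    obtain ⟨h1, h2⟩ := Submodule.mem_inf.mp hg
    refine Submodule.mem_inf.mpr ⟨hth g h1, ?_⟩
    rw [LinearMap.mem_ker, ← hdth g h1, LinearMap.mem_ker.mp h2, map_zero]
  have hZe : ∀ g ∈ cocyclesAll r B'', et g ∈ cocyclesAll r B := by
    intro g hg
    obtain ⟨h1, h2⟩ := Submodule.mem_inf.mp hg
    refine Submodule.mem_inf.mpr ⟨het g h1, ?_⟩
    rw [LinearMap.mem_ker, ← hdet g h1, LinearMap.mem_ker.mp h2, map_zero]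
  have hBth : ∀ g ∈ coboundsAll r B, th g ∈ coboundsAll r B'' := by
    intro g hg
    obtain ⟨h1, h2⟩ := Submodule.mem_inf.mp hg
    obtain ⟨g', hg', rfl⟩ := Submodule.mem_map.mp h2
    exact Submodule.mem_inf.mpr ⟨hth _ h1,
      Submodule.mem_map.mpr ⟨th g', hth g' hg', (hdth g' hg').symm⟩⟩
  have hBet : ∀ g ∈ coboundsAll r B'', et g ∈ coboundsAll r B := by
    intro g hg
    obtain ⟨h1, h2⟩ := Submodule.mem_inf.mp hg
    obtain ⟨g', hg', rfl⟩ := Submodule.mem_map.mp h2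
    exact Submodule.mem_inf.mpr ⟨het _ h1,
      Submodule.mem_map.mpr ⟨et g', het g' hg', (hdet g' hg').symm⟩⟩
  refine ⟨hZ, LinearEquiv.ofLinear
    (Submodule.mapQ _ _ (th.restrict hZ) ?_)
    (Submodule.mapQ _ _ (et.restrict hZe) ?_) ?_ ?_, ?_⟩
  · intro v hv
    simp only [Submodule.mem_comap, Submodule.subtype_apply,
      LinearMap.restrict_coe_apply] at hv ⊢
    exact hBth _ hv
  · intro v hv
    simp only [Submodule.mem_comap, Submodule.subtype_apply,
      LinearMap.restrict_coe_apply] at hv ⊢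
    exact hBet _ hv
  · apply Submodule.linearMap_qext
    refine LinearMap.ext fun z => ?_
    simp only [LinearMap.comp_apply, Submodule.mkQ_apply, Submodule.mapQ_apply,
      LinearMap.id_apply]
    congr 1
    refine Subtype.ext ?_
    simp only [LinearMap.restrict_coe_apply]
    exact het' _ (Submodule.mem_inf.mp z.2).1
  · apply Submodule.linearMap_qext
    refine LinearMap.ext fun z => ?_
    simp only [LinearMap.comp_apply, Submodule.mkQ_apply, Submodule.mapQ_apply,
      LinearMap.id_apply]
    congr 1
    refine Subtype.ext ?_
    simp only [LinearMap.restrict_coe_apply]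
    exact hte _ (Submodule.mem_inf.mp z.2).1
  · intro g hg
    rw [LinearEquiv.ofLinear_apply, Submodule.mapQ_apply]
    congr 1

end Aux14

/-- Section 5. If `L(A)` is geometric and `x₀` is a
separator, the map `θ : D(A') → D(Ã'')`, `σ ↦ {x₀ ∩ y : y ∈ σ}`, maps basis
elements bijectively to basis elements, commutes with the differentials (for
compatible linear orders), induces an isomorphism of ungraded ℚ-vector spaces
`H^*(D(A')) ≅ H^*(D(A''))`, and shifts the degree of a basis element `σ` by
the even non-positive amount `−2 codim(x₀ + ∩σ)`. -/
theorem statement14 {l : ℕ} (r : LinearOrder (Subsp l)) (A : Finset (Subsp l))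
    (harr : IsArrangement A) (x₀ : Subsp l) (hx₀ : x₀ ∈ A)
    (hgeo : IsGeometricL A) (hsep : IsSeparator A x₀) (hord : GoodOrder r A x₀) :
    Set.BijOn (fun σ : Finset (Subsp l) => σ.image fun y => x₀ ⊓ y)
      {σ | σ ⊆ A.erase x₀} {τ | τ ⊆ tildeRestriction x₀ (A.erase x₀)} ∧
    (∀ f ∈ Dsub (A.erase x₀), theta x₀ (diff r f) = diff r (theta x₀ f)) ∧
    (∃ (hZ : ∀ f ∈ cocyclesAll r (A.erase x₀),
        theta x₀ f ∈ cocyclesAll r (tildeRestriction x₀ (A.erase x₀)))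
      (e : cohomologyAll r (A.erase x₀) ≃ₗ[ℚ]
        cohomologyAll r (tildeRestriction x₀ (A.erase x₀))),
      ∀ (f : DFull l) (hf : f ∈ cocyclesAll r (A.erase x₀)),
        e (Submodule.Quotient.mk ⟨f, hf⟩) =
          Submodule.Quotient.mk ⟨theta x₀ f, hZ f hf⟩) ∧
    (∀ σ : Finset (Subsp l), σ ⊆ A.erase x₀ →
      degIn x₀ (σ.image fun y => x₀ ⊓ y) =
          degIn ⊤ σ - 2 * codimIn ⊤ (x₀ ⊔ inter σ) ∧
        0 ≤ codimIn ⊤ (x₀ ⊔ inter σ)) := by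
  obtain ⟨p, rfl⟩ : ∃ p : PLift (LinearOrder (Subsp l)), p.down = r := ⟨PLift.up r, rfl⟩
  have hde0 : @LinearOrder.toDecidableEq (Subsp l) p.down
      = fun (a b : Subsp l) => Classical.propDecidable (a = b) := by
    funext a b; exact Subsingleton.elim _ _
  have hdlt : @LinearOrder.toDecidableLT (Subsp l) p.down
      = fun (a b : Subsp l) => Classical.propDecidable (p.down.lt a b) := by
    funext a b; exact Subsingleton.elim _ _
  obtain ⟨hord1, hord2, hord3⟩ := hord
  have hinj : ∀ y ∈ A.erase x₀, ∀ z ∈ A.erase x₀, x₀ ⊓ y = x₀ ⊓ z → y = z :=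
    f_inj harr hx₀ hgeo hsep
  have hxtop : x₀ ≠ ⊤ := by
    intro h
    exact absurd (by rw [h, top_inf_eq]) (ne_of_lt hsep)
  have hytop : ∀ y ∈ A.erase x₀, y ≠ (⊤ : Subsp l) := by
    intro y hy h
    exact (Finset.mem_erase.mp hy).1
      (harr x₀ hx₀ y (Finset.mem_of_mem_erase hy) (h ▸ le_top)).symm
  -- condition equivalence for the differentials
  have hcond : ∀ σ : Finset (Subsp l), σ ⊆ A.erase x₀ → ∀ y ∈ σ,
      (inter ((σ.erase y).image fun w => x₀ ⊓ w) = inter (σ.image fun w => x₀ ⊓ w) ↔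
        inter (σ.erase y) = inter σ) := by
    intro σ hσ y hyσ
    rcases Finset.eq_empty_or_nonempty (σ.erase y) with he | hne
    · have hσy : σ = {y} := by
        ext z
        simp only [Finset.mem_singleton]
        constructor
        · intro hz
          by_contra hzy
          have : z ∈ σ.erase y := Finset.mem_erase.mpr ⟨hzy, hz⟩
          rw [he] at this
          exact absurd this (Finset.notMem_empty z)
        · intro hz; exact hz ▸ hyσ
      constructor
      · intro h
        exfalso
        rw [he, hσy] at h
        simp only [Finset.image_empty, Finset.image_singleton, inter,
          Finset.inf_empty, Finset.inf_singleton, id_eq] at h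
        exact hxtop (inf_eq_top_iff.mp h.symm).1
      · intro h
        exfalso
        rw [he, hσy] at h
        simp only [inter, Finset.inf_empty, Finset.inf_singleton, id_eq] at h
        exact hytop y (hσ hyσ) h.symm
    · constructor
      · intro h
        have heq : x₀ ⊓ inter σ = x₀ ⊓ inter (σ.erase y) := by
          rw [← inf_image_inter' x₀ σ, ← inf_image_inter' x₀ (σ.erase y), h]
        exact (key_inj harr hx₀ hgeo hsep hσ ((Finset.erase_subset _ _).trans hσ)
          (inter_mono' (Finset.erase_subset _ _)) heq).symm
      · intro h
        rw [inf_image_inter x₀ _ hne, inf_image_inter x₀ _ ⟨y, hyσ⟩, h]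
  -- strict monotonicity with respect to the linear orders
  have hmono : ∀ y ∈ A.erase x₀, ∀ z ∈ A.erase x₀, p.down.lt y z → p.down.lt (x₀ ⊓ y) (x₀ ⊓ z) := by
    intro y hy z hz hlt
    refine hord3 y hy z hz hlt ?_
    intro h
    exact absurd (hinj y hy z hz h) (@ne_of_lt _ p.down.toPreorder _ _ hlt)
  -- positions are preserved
  have hpos : ∀ σ : Finset (Subsp l), σ ⊆ A.erase x₀ → ∀ y ∈ σ,
      pos p.down (σ.image fun w => x₀ ⊓ w) (x₀ ⊓ y) = pos p.down σ y := by
    intro σ hσ y hyσ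
    unfold pos
    congr 1
    refine (Finset.card_bij (fun z _ => x₀ ⊓ z) ?_ ?_ ?_).symm
    · intro a ha
      obtain ⟨ha1, ha2⟩ := Finset.mem_filter.mp ha
      exact Finset.mem_filter.mpr ⟨Finset.mem_image_of_mem _ ha1,
        hmono a (hσ ha1) y (hσ hyσ) ha2⟩
    · intro a ha b hb hab
      exact hinj a (hσ (Finset.mem_of_mem_filter a ha))
        b (hσ (Finset.mem_of_mem_filter b hb)) hab
    · intro w hw
      obtain ⟨hw1, hw2⟩ := Finset.mem_filter.mp hw
      obtain ⟨z, hz, rfl⟩ := Finset.mem_image.mp hw1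
      refine ⟨z, Finset.mem_filter.mpr ⟨hz, ?_⟩, rfl⟩
      rcases @lt_trichotomy _ p.down z y with h | h | h
      · exact h
      · subst h; exact absurd hw2 (@lt_irrefl _ p.down.toPreorder _)
      · exact absurd hw2 (@lt_asymm _ p.down.toPreorder _ _
          (hmono y (hσ hyσ) z (hσ hz) h))
  -- θ commutes with the differential on basis elements
  have hcomm : ∀ σ : Finset (Subsp l), σ ⊆ A.erase x₀ →
      dBasis p.down (σ.image fun y => x₀ ⊓ y) = theta x₀ (dBasis p.down σ) := by
    intro σ hσ
    rw [dBasis, dBasis, map_sum]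
    have hfil : ((σ.image fun y => x₀ ⊓ y).filter fun w =>
          inter ((σ.image fun y => x₀ ⊓ y).erase w) = inter (σ.image fun y => x₀ ⊓ y))
        = (σ.filter fun y => inter (σ.erase y) = inter σ).image fun y => x₀ ⊓ y := by
      ext w
      simp only [Finset.mem_filter, Finset.mem_image]
      constructor
      · rintro ⟨⟨z, hz, rfl⟩, hc⟩
        refine ⟨z, ⟨hz, ?_⟩, rfl⟩
        rw [← hcond σ hσ z hz]
        rwa [erase_image_of_inj hσ hinj hz]
      · rintro ⟨z, ⟨hz, hc⟩, rfl⟩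
        refine ⟨⟨z, hz, rfl⟩, ?_⟩
        rw [← erase_image_of_inj hσ hinj hz]
        exact (hcond σ hσ z hz).mpr hc
    rw [hfil, Finset.sum_image (fun a ha b hb hab =>
      hinj a (hσ (Finset.mem_of_mem_filter a ha)) b (hσ (Finset.mem_of_mem_filter b hb)) hab)]
    refine Finset.sum_congr rfl ?_
    intro y hy
    have hyσ : y ∈ σ := Finset.mem_of_mem_filter y hy
    rw [map_smul, theta_apply_single, ← erase_image_of_inj hσ hinj hyσ, hpos σ hσ y hyσ]
  -- θ commutes with the differential on `D(A')`
  have hpart2 : ∀ g ∈ Dsub (A.erase x₀), theta x₀ (diff p.down g) = diff p.down (theta x₀ g) := by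
    intro g hg
    induction hg using Submodule.span_induction with
    | mem g hgmem =>
        obtain ⟨σ, hσ, rfl⟩ := hgmem
        rw [diff_apply_single, theta_apply_single, diff_apply_single, hcomm σ hσ]
    | zero => simp
    | add g h _ _ hg hh => rw [map_add, map_add, map_add, map_add, hg, hh]
    | smul c g _ hg => rw [map_smul, map_smul, map_smul, map_smul, hg]
  -- θ maps `D(A')` into `D(Ã'')`
  have htheta_mem : ∀ g ∈ Dsub (A.erase x₀),
      theta x₀ g ∈ Dsub (tildeRestriction x₀ (A.erase x₀)) := by
    intro g hg
    induction hg using Submodule.span_induction with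
    | mem g hgmem =>
        obtain ⟨σ, hσ, rfl⟩ := hgmem
        rw [theta_apply_single]
        exact Submodule.subset_span ⟨σ.image fun y => x₀ ⊓ y,
          Finset.image_subset_image hσ, rfl⟩
    | zero => exact Submodule.zero_mem _
    | add g h _ _ hg hh => rw [map_add]; exact Submodule.add_mem _ hg hh
    | smul c g _ hg => rw [map_smul]; exact Submodule.smul_mem _ c hg
  -- the inverse bijection on basis elements
  have hginv_image : ∀ σ : Finset (Subsp l), σ ⊆ A.erase x₀ →
      ginv x₀ (A.erase x₀) (σ.image fun y => x₀ ⊓ y) = σ := by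
    intro σ hσ
    ext y
    simp only [ginv, Finset.mem_filter, Finset.mem_image]
    constructor
    · rintro ⟨hyA, z, hz, hfz⟩
      rwa [hinj z (hσ hz) y hyA hfz] at hz
    · intro hy; exact ⟨hσ hy, y, hy, rfl⟩
  have himage_ginv : ∀ τ : Finset (Subsp l), τ ⊆ tildeRestriction x₀ (A.erase x₀) →
      (ginv x₀ (A.erase x₀) τ).image (fun y => x₀ ⊓ y) = τ := by
    intro τ hτ
    ext w
    simp only [Finset.mem_image, ginv, Finset.mem_filter]
    constructor
    · rintro ⟨z, ⟨hzA, hzw⟩, rfl⟩; exact hzw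
    · intro hw
      obtain ⟨y, hy, rfl⟩ := Finset.mem_image.mp (hτ hw)
      exact ⟨y, ⟨hy, hw⟩, rfl⟩
  have heta_mem : ∀ g ∈ Dsub (tildeRestriction x₀ (A.erase x₀)),
      eta x₀ (A.erase x₀) g ∈ Dsub (A.erase x₀) := by
    intro g hg
    induction hg using Submodule.span_induction with
    | mem g hgmem =>
        obtain ⟨τ, hτ, rfl⟩ := hgmem
        rw [eta_apply_single]
        exact Submodule.subset_span ⟨ginv x₀ (A.erase x₀) τ, Finset.filter_subset _ _, rfl⟩
    | zero => exact Submodule.zero_mem _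
    | add g h _ _ hg hh => rw [map_add]; exact Submodule.add_mem _ hg hh
    | smul c g _ hg => rw [map_smul]; exact Submodule.smul_mem _ c hg
  have heta_theta : ∀ g ∈ Dsub (A.erase x₀), eta x₀ (A.erase x₀) (theta x₀ g) = g := by
    intro g hg
    induction hg using Submodule.span_induction with
    | mem g hgmem =>
        obtain ⟨σ, hσ, rfl⟩ := hgmem
        rw [theta_apply_single, eta_apply_single, hginv_image σ hσ]
    | zero => simp
    | add g h _ _ hg hh => rw [map_add, map_add, hg, hh]
    | smul c g _ hg => rw [map_smul, map_smul, hg]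
  have htheta_eta : ∀ g ∈ Dsub (tildeRestriction x₀ (A.erase x₀)),
      theta x₀ (eta x₀ (A.erase x₀) g) = g := by
    intro g hg
    induction hg using Submodule.span_induction with
    | mem g hgmem =>
        obtain ⟨τ, hτ, rfl⟩ := hgmem
        rw [eta_apply_single, theta_apply_single, himage_ginv τ hτ]
    | zero => simp
    | add g h _ _ hg hh => rw [map_add, map_add, hg, hh]
    | smul c g _ hg => rw [map_smul, map_smul, hg]
  have heta_d : ∀ g ∈ Dsub (tildeRestriction x₀ (A.erase x₀)),
      eta x₀ (A.erase x₀) (diff p.down g) = diff p.down (eta x₀ (A.erase x₀) g) := by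
    intro g hg
    have h1 : eta x₀ (A.erase x₀) g ∈ Dsub (A.erase x₀) := heta_mem g hg
    have h2 : diff p.down (eta x₀ (A.erase x₀) g) ∈ Dsub (A.erase x₀) := diff_mem p.down _ h1
    have h3 : theta x₀ (diff p.down (eta x₀ (A.erase x₀) g)) = diff p.down g := by
      rw [hpart2 _ h1, htheta_eta g hg]
    calc eta x₀ (A.erase x₀) (diff p.down g)
        = eta x₀ (A.erase x₀) (theta x₀ (diff p.down (eta x₀ (A.erase x₀) g))) := by rw [h3]
      _ = diff p.down (eta x₀ (A.erase x₀) g) := heta_theta _ h2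
  refine ⟨⟨?_, ?_, ?_⟩, hpart2, ?_, ?_⟩
  -- MapsTo
  · intro σ hσ
    exact Finset.image_subset_image hσ
  -- InjOn
  · intro σ₁ h₁ σ₂ h₂ heq
    ext y
    have heq' : σ₁.image (fun w => x₀ ⊓ w) = σ₂.image (fun w => x₀ ⊓ w) := heq
    constructor
    · intro hy
      have : x₀ ⊓ y ∈ σ₂.image fun w => x₀ ⊓ w := by
        rw [← heq']; exact Finset.mem_image_of_mem _ hy
      obtain ⟨z, hz, hzy⟩ := Finset.mem_image.mp this
      rwa [hinj z (h₂ hz) y (h₁ hy) hzy] at hz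
    · intro hy
      have : x₀ ⊓ y ∈ σ₁.image fun w => x₀ ⊓ w := by
        rw [heq']; exact Finset.mem_image_of_mem _ hy
      obtain ⟨z, hz, hzy⟩ := Finset.mem_image.mp this
      rwa [hinj z (h₁ hz) y (h₂ hy) hzy] at hz
  -- SurjOn
  · intro τ hτ
    exact ⟨ginv x₀ (A.erase x₀) τ, Finset.filter_subset _ _, himage_ginv τ hτ⟩
  -- cohomology isomorphism
  · exact cohomIso p.down (A.erase x₀) (tildeRestriction x₀ (A.erase x₀))
      (theta x₀) (eta x₀ (A.erase x₀)) htheta_mem heta_mem hpart2 heta_d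
      heta_theta htheta_eta
  -- degree shift
  · intro σ hσ
    have hcard : (σ.image fun y => x₀ ⊓ y).card = σ.card :=
      Finset.card_image_of_injOn fun a ha b hb hab =>
        hinj a (hσ (Finset.mem_coe.mp ha)) b (hσ (Finset.mem_coe.mp hb)) hab
    have hrank := Submodule.finrank_sup_add_finrank_inf_eq x₀ (inter σ)
    have hWW : inter (σ.image fun y => x₀ ⊓ y) ⊓ x₀ = x₀ ⊓ inter σ := by
      rw [inf_comm, inf_image_inter' x₀ σ]
    have e1 : Module.finrank ℂ (inter (σ.image fun y => x₀ ⊓ y) ⊓ x₀ : Subsp l)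
        = Module.finrank ℂ (x₀ ⊓ inter σ : Subsp l) :=
      congrArg (fun W : Subsp l => Module.finrank ℂ W) hWW
    have e2 : Module.finrank ℂ (inter σ ⊓ ⊤ : Subsp l) = Module.finrank ℂ (inter σ) :=
      congrArg (fun W : Subsp l => Module.finrank ℂ W) (inf_top_eq (inter σ))
    have e3 : Module.finrank ℂ ((x₀ ⊔ inter σ) ⊓ ⊤ : Subsp l)
        = Module.finrank ℂ (x₀ ⊔ inter σ : Subsp l) :=
      congrArg (fun W : Subsp l => Module.finrank ℂ W) (inf_top_eq (x₀ ⊔ inter σ))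
    have e4 : Module.finrank ℂ (x₀ ⊔ inter σ : Subsp l) ≤
        Module.finrank ℂ (⊤ : Subsp l) :=
      Submodule.finrank_mono le_top
    constructor
    · simp only [degIn, codimIn, hcard]
      rw [e1, e2, e3]
      have hr := hrank
      omega
    · simp only [codimIn]
      rw [e3]
      omega
end
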